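/- arXiv:1809.10931 — 3 statements merged into one kernel-verified Lean document; each statement's English description precedes it below -/
import Mathlib

section
/- Let F be a field of prime order, let ω = e^{2πi/|F|}, and let P : F^n → F be a polynomial of degree d. Suppose there exist polynomials Q_1,...,Q_r : F^n → F of degree at most d−1 and a function f : F^r → F such that P = f(Q_1,...,Q_r). Then there exist α_1,...,α_r ∈ F such that the degree-(d−1) polynomial Q(x) = ∑_{i≤r} α_i Q_i(x) satisfies |E_{x∈F^n} ω^{P(x)} · conj(ω^{Q(x)})| ≥ |F|^{−r}. -/
open Finset

namespace LowRankAux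

variable (p : ℕ) [Fact p.Prime]

noncomputable def psi : AddChar (ZMod p) ℂ :=
  haveI : NeZero p := ⟨(Fact.out (p := p.Prime)).ne_zero⟩
  AddChar.zmodChar p
    ((Complex.isPrimitiveRoot_exp p (Fact.out (p := p.Prime)).ne_zero).pow_eq_one)

lemma psi_apply (a : ZMod p) :
    psi p a = Complex.exp (2 * Real.pi * Complex.I / p) ^ a.val := by
  haveI : NeZero p := ⟨(Fact.out (p := p.Prime)).ne_zero⟩
  exact AddChar.zmodChar_apply _ _

lemma abs_psi (a : ZMod p) : ‖psi p a‖ = 1 := by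
  rw [psi_apply, norm_pow]
  have h : (2 * (Real.pi : ℂ) * Complex.I / (p : ℂ)) = ((2 * Real.pi / p : ℝ) : ℂ) * Complex.I := by
    push_cast; ring
  rw [h, Complex.norm_exp_ofReal_mul_I, one_pow]

lemma conj_psi (a : ZMod p) : (starRingEnd ℂ) (psi p a) = psi p (-a) := by
  rw [AddChar.map_neg_eq_inv, Complex.inv_eq_conj (abs_psi p a)]

lemma conj_psi_mul (a : ZMod p) : (starRingEnd ℂ) (psi p a) * psi p a = 1 := by
  rw [conj_psi, ← AddChar.map_add_eq_mul, neg_add_cancel, AddChar.map_zero_eq_one]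

lemma psi_eq_one_iff (a : ZMod p) : psi p a = 1 ↔ a = 0 := by
  haveI : NeZero p := ⟨(Fact.out (p := p.Prime)).ne_zero⟩
  rw [psi_apply,
    (Complex.isPrimitiveRoot_exp p (Fact.out (p := p.Prime)).ne_zero).pow_eq_one_iff_dvd]
  constructor
  · intro h
    have hlt := ZMod.val_lt a
    have h0 : a.val = 0 := by
      rcases Nat.eq_zero_or_pos a.val with h0 | h0
      · exact h0
      · exact absurd (Nat.le_of_dvd h0 h) (by omega)
    exact (ZMod.val_eq_zero a).mp h0
  · intro h; subst h; simp

variable {r : ℕ}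

/-- The additive character `α ↦ ψ(⟨α, y⟩)` on `(ZMod p)^r`. -/
noncomputable def dotChar (y : Fin r → ZMod p) : AddChar (Fin r → ZMod p) ℂ :=
  (psi p).compAddMonoidHom
    { toFun := fun α => ∑ i, α i * y i
      map_zero' := by simp
      map_add' := fun a b => by
        simp [add_mul, Finset.sum_add_distrib] }

lemma dotChar_apply (y α : Fin r → ZMod p) :
    dotChar p y α = psi p (∑ i, α i * y i) := rfl

lemma orth (y : Fin r → ZMod p) :
    ∑ α : Fin r → ZMod p, psi p (∑ i, α i * y i)
      = if y = 0 then ((p : ℂ)) ^ r else 0 := by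
  classical
  haveI : NeZero p := ⟨(Fact.out (p := p.Prime)).ne_zero⟩
  have hsum := AddChar.sum_eq_ite (dotChar p y)
  have hcard : (Fintype.card (Fin r → ZMod p)) = p ^ r := by
    simp [ZMod.card]
  by_cases hy : y = 0
  · subst hy
    have hzero : dotChar p (0 : Fin r → ZMod p) = 0 := by
      ext α
      simp [dotChar_apply]
    rw [if_pos rfl]
    calc ∑ α : Fin r → ZMod p, psi p (∑ i, α i * (0 : Fin r → ZMod p) i)
        = ∑ α : Fin r → ZMod p, dotChar p 0 α := by
          simp [dotChar_apply]
      _ = if dotChar p (0 : Fin r → ZMod p) = 0 then ((Fintype.card (Fin r → ZMod p) : ℂ)) else 0 := hsum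
      _ = (p : ℂ) ^ r := by rw [if_pos hzero, hcard]; push_cast; ring
  · obtain ⟨i, hi⟩ : ∃ i, y i ≠ 0 := by
      by_contra h
      push_neg at h
      exact hy (funext h)
    have hne : dotChar p y ≠ 0 := by
      intro h0
      have h1 : dotChar p y (Pi.single i (y i)⁻¹) = 1 := by rw [h0]; simp
      rw [dotChar_apply] at h1
      have hsum1 : (∑ j, (Pi.single i (y i)⁻¹ : Fin r → ZMod p) j * y j) = (y i)⁻¹ * y i := by
        rw [Finset.sum_eq_single i]
        · simp
        · intro j _ hj; simp [Pi.single_eq_of_ne hj]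
        · intro h; exact absurd (Finset.mem_univ i) h
      rw [hsum1, inv_mul_cancel₀ hi] at h1
      have := (psi_eq_one_iff p 1).mp h1
      exact one_ne_zero this
    rw [if_neg hy]
    calc ∑ α : Fin r → ZMod p, psi p (∑ i, α i * y i)
        = ∑ α : Fin r → ZMod p, dotChar p y α := by simp [dotChar_apply]
      _ = if dotChar p y = 0 then ((Fintype.card (Fin r → ZMod p) : ℂ)) else 0 := hsum
      _ = 0 := if_neg hne

theorem key (n r : ℕ) (g : (Fin n → ZMod p) → ZMod p)
    (Qv : (Fin n → ZMod p) → (Fin r → ZMod p))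
    (f : (Fin r → ZMod p) → ZMod p)
    (hf : ∀ x, g x = f (Qv x)) :
    ∃ α : Fin r → ZMod p,
      (p : ℝ) ^ n / (p : ℝ) ^ r ≤
        ‖∑ x, psi p (g x) * (starRingEnd ℂ) (psi p (∑ i, α i * Qv x i))‖ := by
  classical
  haveI : NeZero p := ⟨(Fact.out (p := p.Prime)).ne_zero⟩
  set S : (Fin r → ZMod p) → ℂ :=
    fun α => ∑ x, psi p (g x) * (starRingEnd ℂ) (psi p (∑ i, α i * Qv x i)) with hS
  set Cc : (Fin r → ZMod p) → ℂ :=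
    fun α => ∑ y, (starRingEnd ℂ) (psi p (f y)) * psi p (∑ i, α i * y i) with hCc
  have hT : ∑ α, Cc α * S α = (p : ℂ) ^ r * (p : ℂ) ^ n := by
    have step1 : ∀ α, Cc α * S α =
        ∑ y, ∑ x, ((starRingEnd ℂ) (psi p (f y)) * psi p (g x)) *
          (psi p (∑ i, α i * y i) * (starRingEnd ℂ) (psi p (∑ i, α i * Qv x i))) := by
      intro α
      rw [hS, hCc, Finset.sum_mul_sum]
      apply Finset.sum_congr rfl; intro y _
      apply Finset.sum_congr rfl; intro x _
      ring
    calc ∑ α, Cc α * S α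
        = ∑ α : Fin r → ZMod p, ∑ y : Fin r → ZMod p, ∑ x : Fin n → ZMod p,
            ((starRingEnd ℂ) (psi p (f y)) * psi p (g x)) *
            (psi p (∑ i, α i * y i) * (starRingEnd ℂ) (psi p (∑ i, α i * Qv x i))) := by
          exact Finset.sum_congr rfl fun α _ => step1 α
      _ = ∑ y : Fin r → ZMod p, ∑ x : Fin n → ZMod p, ∑ α : Fin r → ZMod p,
            ((starRingEnd ℂ) (psi p (f y)) * psi p (g x)) *
            (psi p (∑ i, α i * y i) * (starRingEnd ℂ) (psi p (∑ i, α i * Qv x i))) := by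
          rw [Finset.sum_comm]
          apply Finset.sum_congr rfl; intro y _
          rw [Finset.sum_comm]
      _ = ∑ y : Fin r → ZMod p, ∑ x : Fin n → ZMod p,
            ((starRingEnd ℂ) (psi p (f y)) * psi p (g x)) *
            (if (fun i => y i - Qv x i) = 0 then ((p:ℂ))^r else 0) := by
          apply Finset.sum_congr rfl; intro y _
          apply Finset.sum_congr rfl; intro x _
          rw [← Finset.mul_sum]
          congr 1
          have hinner : ∀ α : Fin r → ZMod p,
              psi p (∑ i, α i * y i) * (starRingEnd ℂ) (psi p (∑ i, α i * Qv x i))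
                = psi p (∑ i, α i * (y i - Qv x i)) := by
            intro α
            rw [conj_psi, ← AddChar.map_add_eq_mul]
            congr 1
            rw [← Finset.sum_neg_distrib, ← Finset.sum_add_distrib]
            apply Finset.sum_congr rfl; intro i _
            ring
          exact (Finset.sum_congr rfl fun α _ => hinner α).trans (orth p _)
      _ = ∑ x : Fin n → ZMod p, ((starRingEnd ℂ) (psi p (f (Qv x))) * psi p (g x)) * ((p:ℂ))^r := by
          rw [Finset.sum_comm]
          apply Finset.sum_congr rfl; intro x _
          rw [Finset.sum_eq_single (Qv x)]
          · rw [if_pos (by funext i; simp)]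
          · intro y _ hy
            rw [if_neg, mul_zero]
            intro h
            apply hy
            funext i
            have := congrFun h i
            simpa [sub_eq_zero] using this
          · intro h; exact absurd (Finset.mem_univ _) h
      _ = (p : ℂ) ^ r * (p : ℂ) ^ n := by
          have hone : ∀ x, (starRingEnd ℂ) (psi p (f (Qv x))) * psi p (g x) = 1 := by
            intro x
            rw [hf x, conj_psi_mul]
          rw [show (∑ x : Fin n → ZMod p,
              ((starRingEnd ℂ) (psi p (f (Qv x))) * psi p (g x)) * ((p:ℂ))^r)
              = ∑ _x : Fin n → ZMod p, ((p:ℂ))^r from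
            Finset.sum_congr rfl fun x _ => by rw [hone x, one_mul]]
          rw [Finset.sum_const, Finset.card_univ]
          simp [ZMod.card]
          ring
  have habsCc : ∀ α, ‖Cc α‖ ≤ (p : ℝ) ^ r := by
    intro α
    calc ‖Cc α‖ ≤ ∑ y : Fin r → ZMod p,
          ‖(starRingEnd ℂ) (psi p (f y)) * psi p (∑ i, α i * y i)‖ :=
        norm_sum_le _ _
      _ = ∑ y : Fin r → ZMod p, (1 : ℝ) := by
          apply Finset.sum_congr rfl; intro y _
          rw [norm_mul, Complex.norm_conj, abs_psi, abs_psi, one_mul]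
      _ = (p : ℝ) ^ r := by
          simp [Finset.card_univ, ZMod.card]
  have hsumS : (p : ℝ) ^ n ≤ ∑ α, ‖S α‖ := by
    have hp0 : (0 : ℝ) < (p : ℝ) ^ r := by
      have := (Fact.out (p := p.Prime)).pos
      positivity
    have h1 : (p : ℝ) ^ r * (p : ℝ) ^ n = ‖∑ α, Cc α * S α‖ := by
      rw [hT]
      rw [norm_mul, norm_pow, norm_pow, Complex.norm_natCast]
    have h2 : ‖∑ α, Cc α * S α‖ ≤ ∑ α, ‖Cc α‖ * ‖S α‖ := by
      refine (norm_sum_le _ _).trans_eq ?_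
      apply Finset.sum_congr rfl; intro α _
      rw [norm_mul]
    have h3 : ∑ α, ‖Cc α‖ * ‖S α‖
        ≤ (p : ℝ) ^ r * ∑ α, ‖S α‖ := by
      rw [Finset.mul_sum]
      apply Finset.sum_le_sum
      intro α _
      exact mul_le_mul_of_nonneg_right (habsCc α) (norm_nonneg _)
    have := h1 ▸ (h2.trans h3)
    exact le_of_mul_le_mul_left this hp0
  have hcardA : (Fintype.card (Fin r → ZMod p) : ℝ) = (p : ℝ) ^ r := by
    simp [ZMod.card]
  have hexists : ∃ α ∈ (Finset.univ : Finset (Fin r → ZMod p)),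
      (p : ℝ) ^ n / (p : ℝ) ^ r ≤ ‖S α‖ := by
    apply Finset.exists_le_of_sum_le Finset.univ_nonempty
    have hpr : ((p : ℝ) ^ r) ≠ 0 := by
      have := (Fact.out (p := p.Prime)).pos
      positivity
    calc ∑ _α : Fin r → ZMod p, (p : ℝ) ^ n / (p : ℝ) ^ r
        = (p : ℝ) ^ r * ((p : ℝ) ^ n / (p : ℝ) ^ r) := by
          rw [Finset.sum_const, Finset.card_univ, nsmul_eq_mul, hcardA]
      _ = (p : ℝ) ^ n := by field_simp
      _ ≤ ∑ α, ‖S α‖ := hsumS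
  obtain ⟨α, _, hα⟩ := hexists
  exact ⟨α, hα⟩

end LowRankAux

/-- If `F = ℤ/p` with `p` prime, `ω = e^{2πi/p}`, `P : F^n → F` is a polynomial of degree `d`
which can be written as `P = f(Q₁,…,Q_r)` with each `Q_i` of degree at most `d-1`, then there
are `α₁,…,α_r ∈ F` such that the polynomial `Q = ∑ α_i Q_i` (of degree at most `d-1`)
satisfies `|𝔼_x ω^{P(x)} · conj(ω^{Q(x)})| ≥ p^{-r}`. -/
theorem low_rank_implies_correlation
    (p : ℕ) [Fact p.Prime]
    (n d r : ℕ) (P : MvPolynomial (Fin n) (ZMod p))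
    (hdeg : P.totalDegree = d)
    (Q : Fin r → MvPolynomial (Fin n) (ZMod p))
    (hQdeg : ∀ i, (Q i).totalDegree ≤ d - 1)
    (f : (Fin r → ZMod p) → ZMod p)
    (hf : ∀ x : Fin n → ZMod p,
      MvPolynomial.eval x P = f (fun i => MvPolynomial.eval x (Q i))) :
    ∃ α : Fin r → ZMod p,
      (p : ℝ) ^ (-(r : ℝ)) ≤ ‖
        ((∑ x : Fin n → ZMod p,
            Complex.exp (2 * Real.pi * Complex.I / p) ^ (MvPolynomial.eval x P).val *
              (starRingEnd ℂ)
                (Complex.exp (2 * Real.pi * Complex.I / p) ^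
                  (MvPolynomial.eval x (∑ i, MvPolynomial.C (α i) * Q i)).val)) /
          (Fintype.card (Fin n → ZMod p) : ℂ))‖ := by
  classical
  haveI : NeZero p := ⟨(Fact.out (p := p.Prime)).ne_zero⟩
  obtain ⟨α, hα⟩ := LowRankAux.key p n r (fun x => MvPolynomial.eval x P)
    (fun x i => MvPolynomial.eval x (Q i)) f hf
  refine ⟨α, ?_⟩
  have hEval : ∀ x : Fin n → ZMod p,
      MvPolynomial.eval x (∑ i, MvPolynomial.C (α i) * Q i)
        = ∑ i, α i * MvPolynomial.eval x (Q i) := by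
    intro x
    rw [map_sum]
    apply Finset.sum_congr rfl; intro i _
    rw [map_mul, MvPolynomial.eval_C]
  have hgoal : (∑ x : Fin n → ZMod p,
      Complex.exp (2 * Real.pi * Complex.I / p) ^ (MvPolynomial.eval x P).val *
        (starRingEnd ℂ)
          (Complex.exp (2 * Real.pi * Complex.I / p) ^
            (MvPolynomial.eval x (∑ i, MvPolynomial.C (α i) * Q i)).val))
      = ∑ x : Fin n → ZMod p, LowRankAux.psi p (MvPolynomial.eval x P) *
          (starRingEnd ℂ) (LowRankAux.psi p (∑ i, α i * MvPolynomial.eval x (Q i))) := by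
    apply Finset.sum_congr rfl; intro x _
    rw [LowRankAux.psi_apply, LowRankAux.psi_apply, hEval]
  rw [hgoal]
  have hcard : (Fintype.card (Fin n → ZMod p) : ℂ) = ((p : ℂ)) ^ n := by
    simp [ZMod.card]
  rw [hcard, norm_div]
  have habs : ‖(p : ℂ) ^ n‖ = (p : ℝ) ^ n := by
    rw [norm_pow, Complex.norm_natCast]
  rw [habs]
  have hrpow : (p : ℝ) ^ (-(r : ℝ)) = ((p : ℝ) ^ r)⁻¹ := by
    rw [Real.rpow_neg (by positivity), Real.rpow_natCast]
  rw [hrpow]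
  have hpn : (0 : ℝ) < (p : ℝ) ^ n := by
    have := (Fact.out (p := p.Prime)).pos
    positivity
  rw [le_div_iff₀ hpn]
  calc ((p:ℝ)^r)⁻¹ * (p:ℝ)^n = (p:ℝ)^n / (p:ℝ)^r := by ring
    _ ≤ _ := hα
end

section
/- Let F be a finite field, let B be the multiset {u_1⊗⋯⊗u_d : u_i ∈ F^{n_i}} in F^{n_1} ⊗ ⋯ ⊗ F^{n_d}, and let B' ⊆ B be a multiset with |B'| ≥ δ|B| for some δ > 0. Then there exists an f_1-system whose elements are chosen from f_2 B' − f_2 B', where f_1 = 16^d/δ² and f_2 = 4^d. -/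
open Finset

/-- The space of `d`-dimensional arrays over `F` with coordinates indexed by `I ⊆ [d]`. -/
abbrev Arr (F : Type*) {d : ℕ} (n : Fin d → ℕ) (I : Finset (Fin d)) :=
  ((i : {x : Fin d // x ∈ I}) → Fin (n i.1)) → F

/-- The rank-one array `u₁ ⊗ ⋯ ⊗ u_d`. -/
def tens {F : Type*} [Field F] {d : ℕ} {n : Fin d → ℕ}
    (u : (i : Fin d) → Fin (n i) → F) : Arr F n Finset.univ :=
  fun x => ∏ i : Fin d, u i (x ⟨i, Finset.mem_univ i⟩)

/-- The multiset `B = {u₁ ⊗ ⋯ ⊗ u_d : uᵢ ∈ F^{n_i}}`. -/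
def bigB (F : Type*) [Field F] [Fintype F] {d : ℕ} (n : Fin d → ℕ) :
    Multiset (Arr F n Finset.univ) :=
  (Finset.univ : Finset ((i : Fin d) → Fin (n i) → F)).val.map tens

/-- `g ∈ kB - lB`. -/
def InSumDiff {α : Type*} [AddCommGroup α] (B : Multiset α) (k l : ℕ) (g : α) : Prop :=
  ∃ (m m' : ℕ) (a : Fin m → α) (b : Fin m' → α),
    m ≤ k ∧ m' ≤ l ∧ (∀ i, a i ∈ B) ∧ (∀ i, b i ∈ B) ∧ g = ∑ i, a i - ∑ i, b i

/-- `T` is the set of tuples of an `l`-system. -/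
def IsSystemTuples {F : Type*} [Field F] {d : ℕ} {n : Fin d → ℕ} (l : ℝ)
    (T : Finset ((i : Fin d) → Fin (n i) → F)) : Prop :=
  ∃ U : (k : Fin d) → ((i : Fin d) → Fin (n i) → F) → Submodule F (Fin (n k) → F),
    (∀ k u v, (∀ j : Fin d, j < k → u j = v j) → U k u = U k v) ∧
    (∀ k u, (Module.finrank F (Fin (n k) → F) : ℝ) ≤ l + (Module.finrank F (U k u) : ℝ)) ∧
    (∀ u, u ∈ T ↔ ∀ k, u k ∈ U k u)

set_option linter.unusedSectionVars false


open Finset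

section Fourier

variable {F : Type*} [Field F] [Fintype F] [DecidableEq F] {N : ℕ}

/-- The dot product as a linear map. -/
def dotL (γ : Fin N → F) : (Fin N → F) →ₗ[F] F where
  toFun x := ∑ i, γ i * x i
  map_add' x y := by simp [mul_add, Finset.sum_add_distrib]
  map_smul' c x := by simp [Finset.mul_sum, mul_left_comm]

lemma dotL_apply (γ x : Fin N → F) : dotL γ x = ∑ i, γ i * x i := rfl

/-- The character `x ↦ ψ(γ ⬝ x)` of `F^N`. -/
def chW (ψ : AddChar F ℂ) (γ : Fin N → F) : AddChar (Fin N → F) ℂ :=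
  ψ.compAddMonoidHom (dotL γ).toAddMonoidHom

lemma chW_apply (ψ : AddChar F ℂ) (γ x : Fin N → F) :
    chW ψ γ x = ψ (∑ i, γ i * x i) := rfl

lemma chW_comm (ψ : AddChar F ℂ) (γ x : Fin N → F) :
    chW ψ γ x = chW ψ x γ := by
  simp only [chW_apply]
  congr 1
  exact Finset.sum_congr rfl fun i _ => mul_comm _ _

lemma chW_ne_zero (ψ : AddChar F ℂ) (hψ : ψ ≠ 0) (z : Fin N → F) (hz : z ≠ 0) :
    chW ψ z ≠ 0 := by
  obtain ⟨t, ht⟩ := AddChar.ne_zero_iff.1 hψ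
  have hzi : ∃ i, z i ≠ 0 := by
    by_contra h; push_neg at h; exact hz (funext h)
  obtain ⟨i, hi⟩ := hzi
  refine AddChar.ne_zero_iff.2 ⟨(Pi.single i ((z i)⁻¹ * t) : Fin N → F), ?_⟩
  rw [chW_apply]
  have h : ∑ j, z j * (Pi.single i ((z i)⁻¹ * t) : Fin N → F) j = t := by
    rw [Finset.sum_eq_single i]
    · rw [Pi.single_eq_same]; field_simp
    · intro j _ hj; rw [Pi.single_eq_of_ne hj, mul_zero]
    · intro h; exact absurd (Finset.mem_univ i) h
  rw [h]; exact ht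

lemma chW_sum_eq_zero (ψ : AddChar F ℂ) (hψ : ψ ≠ 0) (z : Fin N → F) (hz : z ≠ 0) :
    ∑ γ : Fin N → F, chW ψ γ z = 0 := by
  have h : ∑ γ : Fin N → F, chW ψ z γ = 0 :=
    AddChar.sum_eq_zero_iff_ne_zero.2 (chW_ne_zero ψ hψ z hz)
  rw [← h]
  exact Finset.sum_congr rfl fun γ _ => chW_comm ψ γ z

lemma chW_sum_ite (ψ : AddChar F ℂ) (hψ : ψ ≠ 0) (z : Fin N → F) :
    ∑ γ : Fin N → F, chW ψ γ z
      = if z = 0 then (Fintype.card (Fin N → F) : ℂ) else 0 := by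
  split_ifs with h
  · subst h
    simp [AddChar.map_zero_eq_one]
  · exact chW_sum_eq_zero ψ hψ z h

end Fourier

section Bogolyubov

variable {F : Type*} [Field F] [Fintype F] [DecidableEq F] {N : ℕ}

lemma parseval (ψ : AddChar F ℂ) (hψ : ψ ≠ 0) (A : Finset (Fin N → F)) :
    ∑ γ : Fin N → F, (∑ a ∈ A, chW ψ γ a) * (starRingEnd ℂ) (∑ a ∈ A, chW ψ γ a)
      = (Fintype.card (Fin N → F) : ℂ) * A.card := by
  have hterm : ∀ γ : Fin N → F,
      (∑ a ∈ A, chW ψ γ a) * (starRingEnd ℂ) (∑ a ∈ A, chW ψ γ a)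
        = ∑ p ∈ A ×ˢ A, chW ψ γ (p.1 - p.2) := by
    intro γ
    rw [map_sum]
    simp only [← AddChar.map_neg_eq_conj]
    rw [Finset.sum_mul_sum]
    rw [Finset.sum_product]
    refine Finset.sum_congr rfl fun a _ => Finset.sum_congr rfl fun b _ => ?_
    rw [sub_eq_add_neg, AddChar.map_add_eq_mul]
  calc ∑ γ : Fin N → F, (∑ a ∈ A, chW ψ γ a) * (starRingEnd ℂ) (∑ a ∈ A, chW ψ γ a)
      = ∑ γ : Fin N → F, ∑ p ∈ A ×ˢ A, chW ψ γ (p.1 - p.2) :=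
        Finset.sum_congr rfl fun γ _ => hterm γ
    _ = ∑ p ∈ A ×ˢ A, ∑ γ : Fin N → F, chW ψ γ (p.1 - p.2) := Finset.sum_comm
    _ = ∑ p ∈ A ×ˢ A, if p.1 - p.2 = 0 then (Fintype.card (Fin N → F) : ℂ) else 0 :=
        Finset.sum_congr rfl fun p _ => chW_sum_ite ψ hψ _
    _ = ∑ p ∈ (A ×ˢ A).filter (fun p => p.1 - p.2 = 0), (Fintype.card (Fin N → F) : ℂ) :=
        (Finset.sum_filter _ _).symm
    _ = (((A ×ˢ A).filter (fun p => p.1 - p.2 = 0)).card : ℂ) * (Fintype.card (Fin N → F) : ℂ) := by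
        rw [Finset.sum_const, nsmul_eq_mul]
    _ = (Fintype.card (Fin N → F) : ℂ) * A.card := by
        rw [mul_comm]
        congr 2
        refine Finset.card_bij (fun p _ => p.1) ?_ ?_ ?_
        · intro p hp
          simp only [Finset.mem_filter, Finset.mem_product] at hp
          exact hp.1.1
        · intro p hp q hq h
          simp only [Finset.mem_filter, Finset.mem_product, sub_eq_zero] at hp hq
          have h' : p.1 = q.1 := h
          exact Prod.ext h' (by rw [← hp.2, ← hq.2]; exact h')
        · intro a ha
          exact ⟨(a, a), by simp [Finset.mem_filter, Finset.mem_product, ha], rfl⟩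

set_option maxHeartbeats 1000000 in
lemma quad_identity (ψ : AddChar F ℂ) (hψ : ψ ≠ 0) (A : Finset (Fin N → F)) (x : Fin N → F) :
    ∑ γ : Fin N → F, (∑ a ∈ A, chW ψ γ a) * (∑ a ∈ A, chW ψ γ a) *
        (starRingEnd ℂ) (∑ a ∈ A, chW ψ γ a) * (starRingEnd ℂ) (∑ a ∈ A, chW ψ γ a) *
        chW ψ γ (-x)
      = ((((A ×ˢ A) ×ˢ A ×ˢ A).filter
          (fun p => p.1.1 + p.1.2 - p.2.1 - p.2.2 = x)).card : ℂ)
          * (Fintype.card (Fin N → F) : ℂ) := by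
  have hterm : ∀ γ : Fin N → F,
      (∑ a ∈ A, chW ψ γ a) * (∑ a ∈ A, chW ψ γ a) *
        (starRingEnd ℂ) (∑ a ∈ A, chW ψ γ a) * (starRingEnd ℂ) (∑ a ∈ A, chW ψ γ a) *
        chW ψ γ (-x)
        = ∑ p ∈ (A ×ˢ A) ×ˢ A ×ˢ A, chW ψ γ (p.1.1 + p.1.2 - p.2.1 - p.2.2 - x) := by
    intro γ
    rw [map_sum]
    simp only [← AddChar.map_neg_eq_conj]
    have h1 : (∑ a ∈ A, chW ψ γ a) * (∑ a ∈ A, chW ψ γ a)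
        = ∑ q ∈ A ×ˢ A, chW ψ γ (q.1 + q.2) := by
      rw [Finset.sum_mul_sum, Finset.sum_product]
      exact Finset.sum_congr rfl fun a _ => Finset.sum_congr rfl fun b _ =>
        (AddChar.map_add_eq_mul _ _ _).symm
    have h2 : (∑ a ∈ A, chW ψ γ (-a)) * (∑ a ∈ A, chW ψ γ (-a))
        = ∑ q ∈ A ×ˢ A, chW ψ γ (-q.1 + -q.2) := by
      rw [Finset.sum_mul_sum, Finset.sum_product]
      exact Finset.sum_congr rfl fun a _ => Finset.sum_congr rfl fun b _ =>
        (AddChar.map_add_eq_mul _ _ _).symm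
    have key : ∀ q1 q2 : (Fin N → F) × (Fin N → F),
        chW ψ γ (q1.1 + q1.2) * chW ψ γ (-q2.1 + -q2.2) * chW ψ γ (-x)
          = chW ψ γ (q1.1 + q1.2 - q2.1 - q2.2 - x) := by
      intro q1 q2
      simp only [sub_eq_add_neg, AddChar.map_add_eq_mul]
      ring
    calc (∑ a ∈ A, chW ψ γ a) * (∑ a ∈ A, chW ψ γ a) *
          (∑ a ∈ A, chW ψ γ (-a)) * (∑ a ∈ A, chW ψ γ (-a)) * chW ψ γ (-x)
        = (∑ q ∈ A ×ˢ A, chW ψ γ (q.1 + q.2)) * (∑ q ∈ A ×ˢ A, chW ψ γ (-q.1 + -q.2))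
            * chW ψ γ (-x) := by rw [← h1, ← h2]; ring
      _ = ∑ q1 ∈ A ×ˢ A, ∑ q2 ∈ A ×ˢ A,
            chW ψ γ (q1.1 + q1.2) * chW ψ γ (-q2.1 + -q2.2) * chW ψ γ (-x) := by
          rw [Finset.sum_mul_sum]
          simp only [Finset.sum_mul]
      _ = ∑ q1 ∈ A ×ˢ A, ∑ q2 ∈ A ×ˢ A,
            chW ψ γ (q1.1 + q1.2 - q2.1 - q2.2 - x) :=
          Finset.sum_congr rfl fun q1 _ => Finset.sum_congr rfl fun q2 _ => key q1 q2
      _ = ∑ p ∈ (A ×ˢ A) ×ˢ A ×ˢ A, chW ψ γ (p.1.1 + p.1.2 - p.2.1 - p.2.2 - x) := by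
          simp only [Finset.sum_product]
  calc ∑ γ : Fin N → F, (∑ a ∈ A, chW ψ γ a) * (∑ a ∈ A, chW ψ γ a) *
        (starRingEnd ℂ) (∑ a ∈ A, chW ψ γ a) * (starRingEnd ℂ) (∑ a ∈ A, chW ψ γ a) *
        chW ψ γ (-x)
      = ∑ γ : Fin N → F, ∑ p ∈ (A ×ˢ A) ×ˢ A ×ˢ A,
          chW ψ γ (p.1.1 + p.1.2 - p.2.1 - p.2.2 - x) :=
        Finset.sum_congr rfl fun γ _ => hterm γ
    _ = ∑ p ∈ (A ×ˢ A) ×ˢ A ×ˢ A, ∑ γ : Fin N → F,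
          chW ψ γ (p.1.1 + p.1.2 - p.2.1 - p.2.2 - x) := Finset.sum_comm
    _ = ∑ p ∈ (A ×ˢ A) ×ˢ A ×ˢ A,
          if p.1.1 + p.1.2 - p.2.1 - p.2.2 = x then (Fintype.card (Fin N → F) : ℂ) else 0 := by
        refine Finset.sum_congr rfl fun p _ => ?_
        rw [chW_sum_ite ψ hψ _]
        simp only [sub_eq_zero]
    _ = ∑ p ∈ ((A ×ˢ A) ×ˢ A ×ˢ A).filter (fun p => p.1.1 + p.1.2 - p.2.1 - p.2.2 = x),
          (Fintype.card (Fin N → F) : ℂ) := (Finset.sum_filter _ _).symm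
    _ = _ := by rw [Finset.sum_const, nsmul_eq_mul]

end Bogolyubov

section Codim

variable {F : Type*} [Field F] {M : Type*} [AddCommGroup M] [Module F M]
  [FiniteDimensional F M]

lemma codim_pair (X Y : Submodule F M) (l l' : ℝ)
    (hX : (Module.finrank F M : ℝ) ≤ l + (Module.finrank F X : ℝ))
    (hY : (Module.finrank F M : ℝ) ≤ l' + (Module.finrank F Y : ℝ)) :
    (Module.finrank F M : ℝ) ≤ l + l' + (Module.finrank F ↥(X ⊓ Y) : ℝ) := by
  have h := Submodule.finrank_sup_add_finrank_inf_eq X Y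
  have h2 : Module.finrank F ↥(X ⊔ Y) ≤ Module.finrank F M := Submodule.finrank_le _
  have hcast : (Module.finrank F ↥(X ⊔ Y) : ℝ) + (Module.finrank F ↥(X ⊓ Y) : ℝ)
      = (Module.finrank F X : ℝ) + (Module.finrank F Y : ℝ) := by exact_mod_cast h
  have h2' : (Module.finrank F ↥(X ⊔ Y) : ℝ) ≤ (Module.finrank F M : ℝ) := by exact_mod_cast h2
  linarith

lemma codim_ker (f : M →ₗ[F] F) :
    (Module.finrank F M : ℝ) ≤ 1 + (Module.finrank F ↥(LinearMap.ker f) : ℝ) := by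
  have h := LinearMap.finrank_range_add_finrank_ker f
  have h2 : Module.finrank F ↥(LinearMap.range f) ≤ 1 := by
    have := Submodule.finrank_le (LinearMap.range f)
    rwa [Module.finrank_self] at this
  have hc : (Module.finrank F ↥(LinearMap.range f) : ℝ)
      + (Module.finrank F ↥(LinearMap.ker f) : ℝ) = (Module.finrank F M : ℝ) := by
    exact_mod_cast h
  have h2' : (Module.finrank F ↥(LinearMap.range f) : ℝ) ≤ 1 := by exact_mod_cast h2
  linarith

end Codim

section CodimKer

variable {F : Type*} [Field F] [Fintype F] [DecidableEq F] {N : ℕ}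

lemma codim_inf_ker (K : Finset (Fin N → F)) :
    (Module.finrank F (Fin N → F) : ℝ)
      ≤ K.card + (Module.finrank F ↥(K.inf fun γ => LinearMap.ker (dotL γ)) : ℝ) := by
  classical
  induction K using Finset.induction with
  | empty =>
      rw [Finset.inf_empty]
      simp [finrank_top]
  | @insert γ K hγ ih =>
      rw [Finset.inf_insert]
      have hker := codim_ker (dotL (F := F) γ)
      have h := codim_pair (LinearMap.ker (dotL γ)) (K.inf fun γ => LinearMap.ker (dotL γ))
        1 K.card hker ih
      rw [Finset.card_insert_of_notMem hγ]
      push_cast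
      linarith

end CodimKer

section Bogo

variable {F : Type*} [Field F] [Fintype F] [DecidableEq F] {N : ℕ}

set_option maxHeartbeats 1000000 in
lemma bogolyubov (ψ : AddChar F ℂ) (hψ : ψ ≠ 0) (A : Finset (Fin N → F)) (α : ℝ)
    (hα : 0 < α) (hα1 : α ≤ 1)
    (hA : α * (Fintype.card (Fin N → F) : ℝ) ≤ (A.card : ℝ)) :
    ∃ V : Submodule F (Fin N → F),
      ((Module.finrank F (Fin N → F) : ℝ) ≤ 1/α^2 + (Module.finrank F V : ℝ)) ∧
      ∀ v ∈ V, ∃ a ∈ A, ∃ b ∈ A, ∃ c ∈ A, ∃ e ∈ A, v = a + b - c - e := by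
  classical
  set q : ℝ := (Fintype.card (Fin N → F) : ℝ) with hqdef
  set a : ℝ := (A.card : ℝ) with hadef
  have hq0 : 0 < q := by
    rw [hqdef]; exact_mod_cast Fintype.card_pos
  have ha0 : 0 < a := lt_of_lt_of_le (by positivity) hA
  have haq : a ≤ q := by
    rw [hqdef, hadef]
    exact_mod_cast Finset.card_le_univ A
  set Sc : (Fin N → F) → ℂ := fun γ => ∑ v ∈ A, chW ψ γ v with hScdef
  set R : (Fin N → F) → ℝ := fun γ => Complex.normSq (Sc γ) with hRdef
  have hRnn : ∀ γ, 0 ≤ R γ := fun γ => Complex.normSq_nonneg _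
  have hmulconj : ∀ γ, Sc γ * (starRingEnd ℂ) (Sc γ) = ((R γ : ℝ) : ℂ) :=
    fun γ => Complex.mul_conj _
  -- Parseval, real form
  have hpar : ∑ γ : Fin N → F, R γ = q * a := by
    have hp := parseval ψ hψ A
    have h2 : ∑ γ : Fin N → F, ((R γ : ℝ) : ℂ) = ((q * a : ℝ) : ℂ) := by
      calc ∑ γ : Fin N → F, ((R γ : ℝ) : ℂ)
          = ∑ γ : Fin N → F, Sc γ * (starRingEnd ℂ) (Sc γ) :=
            Finset.sum_congr rfl fun γ _ => (hmulconj γ).symm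
        _ = (Fintype.card (Fin N → F) : ℂ) * (A.card : ℂ) := hp
        _ = ((q * a : ℝ) : ℂ) := by rw [hqdef, hadef]; push_cast; ring
    exact_mod_cast h2
  have hSc0 : Sc 0 = ((a : ℝ) : ℂ) := by
    rw [hScdef, hadef]
    simp [chW_apply]
  have hRzero : R 0 = a^2 := by
    rw [hRdef]
    simp only [hSc0, Complex.normSq_ofReal]
    ring
  set K : Finset (Fin N → F) := univ.filter (fun γ => α * a^2 ≤ R γ) with hKdef
  have h0K : (0 : Fin N → F) ∈ K := by
    rw [hKdef, Finset.mem_filter]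
    refine ⟨Finset.mem_univ _, ?_⟩
    rw [hRzero]
    nlinarith
  have hKR : ∀ γ ∈ K, α * a^2 ≤ R γ := fun γ hγ => (Finset.mem_filter.1 hγ).2
  have hKsum : ∑ γ ∈ K, R γ ≤ q * a := by
    rw [← hpar]
    exact Finset.sum_le_sum_of_subset_of_nonneg (Finset.subset_univ K) fun i _ _ => hRnn i
  have hKsumge : a^2 ≤ ∑ γ ∈ K, R γ := by
    have := Finset.single_le_sum (f := R) (fun γ _ => hRnn γ) h0K
    rwa [hRzero] at this
  have hKcard : (K.card : ℝ) ≤ 1 / α^2 := by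
    have h1 : (K.card : ℝ) * (α * a^2) ≤ ∑ γ ∈ K, R γ := by
      have h := Finset.sum_le_sum hKR
      rwa [Finset.sum_const, nsmul_eq_mul] at h
    have e1 : ((K.card : ℝ) * α * a) * a ≤ q * a := by nlinarith [h1.trans hKsum]
    have s1 : (K.card : ℝ) * α * a ≤ q := le_of_mul_le_mul_right e1 ha0
    have hc0 : (0:ℝ) ≤ (K.card : ℝ) * α := mul_nonneg (Nat.cast_nonneg _) hα.le
    have hp1 : (K.card : ℝ) * α * (α * q) ≤ (K.card : ℝ) * α * a :=
      mul_le_mul_of_nonneg_left hA hc0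
    have s2 : ((K.card : ℝ) * α^2) * q ≤ 1 * q := by nlinarith [hp1, s1]
    have s3 : (K.card : ℝ) * α^2 ≤ 1 := le_of_mul_le_mul_right s2 hq0
    rw [le_div_iff₀ (by positivity : (0:ℝ) < α^2)]
    exact s3
  set V : Submodule F (Fin N → F) := K.inf (fun γ => LinearMap.ker (dotL γ)) with hVdef
  have hVcodim := codim_inf_ker (F := F) K
  refine ⟨V, by rw [← hVdef] at hVcodim; linarith, ?_⟩
  intro v hv
  have hdot : ∀ γ ∈ K, (∑ i, γ i * v i) = 0 := by
    intro γ hγ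
    have h := Submodule.mem_finsetInf.1 hv γ hγ
    simpa [LinearMap.mem_ker, dotL_apply] using h
  have hch : ∀ γ ∈ K, chW ψ γ (-v) = 1 := by
    intro γ hγ
    rw [chW_apply]
    have h : ∑ i, γ i * (-v) i = 0 := by
      have : ∑ i, γ i * (-v) i = -∑ i, γ i * v i := by
        simp [mul_neg]
      rw [this, hdot γ hγ, neg_zero]
    rw [h, AddChar.map_zero_eq_one]
  set cnt := (((A ×ˢ A) ×ˢ A ×ˢ A).filter
    (fun p => p.1.1 + p.1.2 - p.2.1 - p.2.2 = v)).card with hcntdef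
  have hqi := quad_identity ψ hψ A v
  have hterm : ∀ γ : Fin N → F,
      Sc γ * Sc γ * (starRingEnd ℂ) (Sc γ) * (starRingEnd ℂ) (Sc γ) * chW ψ γ (-v)
        = ((R γ^2 : ℝ) : ℂ) * chW ψ γ (-v) := by
    intro γ
    have h2 : Sc γ * Sc γ * (starRingEnd ℂ) (Sc γ) * (starRingEnd ℂ) (Sc γ)
        = (Sc γ * (starRingEnd ℂ) (Sc γ))^2 := by ring
    rw [h2, hmulconj γ]
    push_cast
    ring
  have hqi' : (cnt : ℝ) * q = ∑ γ : Fin N → F, R γ^2 * (chW ψ γ (-v)).re := by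
    have hL : ((cnt : ℂ) * (Fintype.card (Fin N → F) : ℂ)).re = (cnt : ℝ) * q := by
      rw [show ((cnt : ℂ) * (Fintype.card (Fin N → F) : ℂ))
          = (((cnt * Fintype.card (Fin N → F) : ℕ) : ℝ) : ℂ) by push_cast; ring]
      rw [Complex.ofReal_re, hqdef]
      push_cast; ring
    rw [← hL, ← hqi]
    rw [show (∑ γ : Fin N → F, (∑ u ∈ A, chW ψ γ u) * (∑ u ∈ A, chW ψ γ u) *
        (starRingEnd ℂ) (∑ u ∈ A, chW ψ γ u) * (starRingEnd ℂ) (∑ u ∈ A, chW ψ γ u) *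
        chW ψ γ (-v))
      = ∑ γ : Fin N → F, ((R γ^2 : ℝ) : ℂ) * chW ψ γ (-v) from
        Finset.sum_congr rfl fun γ _ => hterm γ]
    rw [Complex.re_sum]
    refine Finset.sum_congr rfl fun γ _ => ?_
    exact Complex.re_ofReal_mul _ _
  -- split over K
  have hsplitR : ∑ γ ∈ K, R γ + ∑ γ ∈ univ.filter (fun γ => ¬ (α * a^2 ≤ R γ)), R γ
      = q * a := by
    rw [← hpar, hKdef]
    exact Finset.sum_filter_add_sum_filter_not univ _ R
  have hsplit : ∑ γ ∈ K, R γ^2 * (chW ψ γ (-v)).re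
      + ∑ γ ∈ univ.filter (fun γ => ¬ (α * a^2 ≤ R γ)), R γ^2 * (chW ψ γ (-v)).re
      = (cnt : ℝ) * q := by
    rw [hqi', hKdef]
    exact Finset.sum_filter_add_sum_filter_not univ _ _
  have hKterm : ∑ γ ∈ K, R γ^2 * (chW ψ γ (-v)).re = ∑ γ ∈ K, R γ^2 := by
    refine Finset.sum_congr rfl fun γ hγ => ?_
    rw [hch γ hγ]
    simp
  have hKge : a^4 ≤ ∑ γ ∈ K, R γ^2 := by
    have h := Finset.single_le_sum (f := fun γ => R γ^2) (fun γ _ => sq_nonneg _) h0K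
    have h' : (a^2)^2 ≤ ∑ γ ∈ K, R γ^2 := by simpa [hRzero] using h
    nlinarith [h']
  have hnotKterm : ∀ γ ∈ univ.filter (fun γ => ¬ (α * a^2 ≤ R γ)),
      -(R γ^2) ≤ R γ^2 * (chW ψ γ (-v)).re := by
    intro γ _
    have habs : |(chW ψ γ (-v)).re| ≤ 1 := by
      have h1 := Complex.abs_re_le_norm (chW ψ γ (-v))
      have h2 : ‖chW ψ γ (-v)‖ = 1 := by
        exact AddChar.norm_apply _ _
      rw [h2] at h1
      exact h1
    nlinarith [sq_nonneg (R γ), abs_le.1 habs]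
  have hnotKsq : ∑ γ ∈ univ.filter (fun γ => ¬ (α * a^2 ≤ R γ)), R γ^2
      ≤ (α * a^2) * ∑ γ ∈ univ.filter (fun γ => ¬ (α * a^2 ≤ R γ)), R γ := by
    rw [Finset.mul_sum]
    refine Finset.sum_le_sum fun γ hγ => ?_
    have hlt : R γ < α * a^2 := not_le.1 (Finset.mem_filter.1 hγ).2
    nlinarith [hRnn γ]
  have hnotKsum : ∑ γ ∈ univ.filter (fun γ => ¬ (α * a^2 ≤ R γ)), R γ ≤ q * a - a^2 := by
    linarith
  have hnotRnn : 0 ≤ ∑ γ ∈ univ.filter (fun γ => ¬ (α * a^2 ≤ R γ)), R γ :=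
    Finset.sum_nonneg fun γ _ => hRnn γ
  have hlow : a^4 - (α * a^2) * (q * a - a^2) ≤ (cnt : ℝ) * q := by
    have h1 : ∑ γ ∈ univ.filter (fun γ => ¬ (α * a^2 ≤ R γ)), (-(R γ^2))
        ≤ ∑ γ ∈ univ.filter (fun γ => ¬ (α * a^2 ≤ R γ)), R γ^2 * (chW ψ γ (-v)).re :=
      Finset.sum_le_sum hnotKterm
    rw [Finset.sum_neg_distrib] at h1
    have h2 : (α * a^2) * (∑ γ ∈ univ.filter (fun γ => ¬ (α * a^2 ≤ R γ)), R γ)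
        ≤ (α * a^2) * (q * a - a^2) := by
      apply mul_le_mul_of_nonneg_left hnotKsum
      positivity
    linarith [hsplit, hKterm, hKge, hnotKsq]
  have hpos : 0 < (cnt : ℝ) * q := by
    have key : α * a^4 ≤ (cnt : ℝ) * q := by
      have : a^4 - (α * a^2) * (q * a - a^2) = a^4 - α * a^3 * q + α * a^4 := by ring
      nlinarith [mul_le_mul_of_nonneg_left hA (le_of_lt (pow_pos ha0 3)), hlow]
    nlinarith [pow_pos ha0 4]
  have hcntpos : 0 < cnt := by
    rcases Nat.eq_zero_or_pos cnt with h | h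
    · rw [h] at hpos
      norm_num at hpos
    · exact h
  obtain ⟨p, hp⟩ := Finset.card_pos.1 hcntpos
  rw [Finset.mem_filter] at hp
  have hmem := hp.1
  rw [Finset.mem_product] at hmem
  have hm1 := hmem.1
  have hm2 := hmem.2
  rw [Finset.mem_product] at hm1 hm2
  exact ⟨p.1.1, hm1.1, p.1.2, hm1.2, p.2.1, hm2.1, p.2.2, hm2.2, hp.2.symm⟩

end Bogo

section Key

variable {F : Type*} [Field F] [Fintype F] [DecidableEq F]

/-- Representation of a rank-one tuple as a short signed combination from `S`, pointwise. -/
abbrev RepL {d : ℕ} {n : Fin d → ℕ} (S : Finset ((i : Fin d) → Fin (n i) → F)) (k : ℕ)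
    (u : (i : Fin d) → Fin (n i) → F) : Prop :=
  ∃ P Q : List ((i : Fin d) → Fin (n i) → F),
    P.length ≤ k ∧ Q.length ≤ k ∧ (∀ s ∈ P, s ∈ S) ∧ (∀ s ∈ Q, s ∈ S) ∧
    ∀ x : (i : Fin d) → Fin (n i),
      ∏ i, u i (x i)
        = (P.map fun s => ∏ i, s i (x i)).sum - (Q.map fun s => ∏ i, s i (x i)).sum

set_option maxHeartbeats 2000000 in
lemma key (d : ℕ) : ∀ (n : Fin d → ℕ) (δ : ℝ), 0 < δ → δ ≤ 1 →
    ∀ S : Finset ((i : Fin d) → Fin (n i) → F),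
    δ * (Fintype.card ((i : Fin d) → Fin (n i) → F) : ℝ) ≤ (S.card : ℝ) →
    ∃ (T : Finset ((i : Fin d) → Fin (n i) → F))
      (U : (k : Fin d) → ((i : Fin d) → Fin (n i) → F) → Submodule F (Fin (n k) → F)),
      (∀ k u v, (∀ j : Fin d, j < k → u j = v j) → U k u = U k v) ∧
      (∀ k u, (Module.finrank F (Fin (n k) → F) : ℝ)
          ≤ (16:ℝ)^d/δ^2 + (Module.finrank F (U k u) : ℝ)) ∧
      (∀ u, u ∈ T ↔ ∀ k, u k ∈ U k u) ∧
      (∀ u ∈ T, RepL S (4^d) u) := by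
  induction d with
  | zero =>
    intro n δ hδ hδ1 S hS
    refine ⟨Finset.univ, fun k => k.elim0, fun k => k.elim0, fun k => k.elim0,
      fun u => ⟨fun _ k => k.elim0, fun _ => Finset.mem_univ u⟩, ?_⟩
    intro u _
    have hcard1 : (Fintype.card ((i : Fin 0) → Fin (n i) → F)) = 1 := Fintype.card_unique
    have hpos : (0:ℝ) < (S.card : ℝ) := by
      rw [hcard1] at hS
      push_cast at hS
      linarith
    have hpos' : 0 < S.card := by exact_mod_cast hpos
    obtain ⟨w, hw⟩ := Finset.card_pos.1 hpos'
    have huw : u = w := Subsingleton.elim u w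
    refine ⟨[u], [], by simp, by simp, ?_, by simp, ?_⟩
    · intro s hs
      simp only [List.mem_singleton] at hs
      rw [hs, huw]
      exact hw
    · intro x
      simp
  | succ d ih =>
    intro n δ hδ hδ1 S hS
    classical
    -- slices
    let slice : (Fin (n 0) → F) → Finset ((i : Fin d) → Fin (n i.succ) → F) :=
      fun a => Finset.univ.filter fun w =>
        Fin.cons (α := fun i : Fin (d+1) => Fin (n i) → F) a w ∈ S
    have hslice : ∀ a : Fin (n 0) → F,
        (S.filter fun u => u 0 = a).card = (slice a).card := by
      intro a
      refine Finset.card_bij (fun u _ => Fin.tail u) ?_ ?_ ?_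
      · intro u hu
        rw [Finset.mem_filter] at hu
        simp only [slice, Finset.mem_filter]
        refine ⟨Finset.mem_univ _, ?_⟩
        have h : Fin.cons (α := fun i : Fin (d+1) => Fin (n i) → F) a (Fin.tail u) = u := by
          rw [← hu.2]
          exact Fin.cons_self_tail u
        rw [h]
        exact hu.1
      · intro u hu v hv h
        rw [Finset.mem_filter] at hu hv
        have h' : Fin.tail u = Fin.tail v := h
        rw [← Fin.cons_self_tail u, ← Fin.cons_self_tail v, hu.2, hv.2, h']
      · intro w hw
        simp only [slice, Finset.mem_filter] at hw
        refine ⟨Fin.cons a w, ?_, ?_⟩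
        · rw [Finset.mem_filter]
          exact ⟨hw.2, Fin.cons_zero _ _⟩
        · exact Fin.tail_cons (α := fun i : Fin (d+1) => Fin (n i) → F) a w
    have hsum : ∑ a : Fin (n 0) → F, ((slice a).card : ℝ) = (S.card : ℝ) := by
      have h := Finset.card_eq_sum_card_fiberwise
        (f := fun u : (i : Fin (d+1)) → Fin (n i) → F => u 0) (s := S) (t := Finset.univ)
        (fun u _ => Finset.mem_univ _)
      have h2 : S.card = ∑ a : Fin (n 0) → F, (slice a).card := by
        rw [h]
        exact Finset.sum_congr rfl fun a _ => hslice a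
      rw [h2]
      push_cast
      rfl
    have hcard : (Fintype.card ((i : Fin (d+1)) → Fin (n i) → F) : ℝ)
        = (Fintype.card (Fin (n 0) → F) : ℝ)
          * (Fintype.card ((i : Fin d) → Fin (n i.succ) → F) : ℝ) := by
      rw [← Nat.cast_mul]
      congr 1
      rw [← Fintype.card_prod]
      exact Fintype.card_congr (Fin.consEquiv (fun i : Fin (d+1) => Fin (n i) → F)).symm
    have hcW : (0:ℝ) < (Fintype.card (Fin (n 0) → F) : ℝ) := by exact_mod_cast Fintype.card_pos
    have hcT : (0:ℝ) < (Fintype.card ((i : Fin d) → Fin (n i.succ) → F) : ℝ) := by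
      exact_mod_cast Fintype.card_pos
    set A1 : Finset (Fin (n 0) → F) := Finset.univ.filter
      (fun a => (δ/2) * (Fintype.card ((i : Fin d) → Fin (n i.succ) → F) : ℝ)
        ≤ ((slice a).card : ℝ)) with hA1def
    have hA1 : (δ/2) * (Fintype.card (Fin (n 0) → F) : ℝ) ≤ (A1.card : ℝ) := by
      by_contra hlt
      push_neg at hlt
      have hb1 : ∑ a ∈ A1, ((slice a).card : ℝ)
          ≤ (A1.card : ℝ) * (Fintype.card ((i : Fin d) → Fin (n i.succ) → F) : ℝ) := by
        calc ∑ a ∈ A1, ((slice a).card : ℝ)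
            ≤ ∑ _a ∈ A1, (Fintype.card ((i : Fin d) → Fin (n i.succ) → F) : ℝ) := by
              refine Finset.sum_le_sum fun a _ => ?_
              exact_mod_cast Finset.card_le_univ (slice a)
          _ = (A1.card : ℝ) * (Fintype.card ((i : Fin d) → Fin (n i.succ) → F) : ℝ) := by
              rw [Finset.sum_const, nsmul_eq_mul]
      have hb2 : ∑ a ∈ Finset.univ.filter (fun a => ¬((δ/2)
            * (Fintype.card ((i : Fin d) → Fin (n i.succ) → F) : ℝ) ≤ ((slice a).card : ℝ))),
            ((slice a).card : ℝ)
          ≤ (Fintype.card (Fin (n 0) → F) : ℝ)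
            * ((δ/2) * (Fintype.card ((i : Fin d) → Fin (n i.succ) → F) : ℝ)) := by
        calc ∑ a ∈ Finset.univ.filter (fun a => ¬((δ/2)
              * (Fintype.card ((i : Fin d) → Fin (n i.succ) → F) : ℝ) ≤ ((slice a).card : ℝ))),
              ((slice a).card : ℝ)
            ≤ ∑ _a ∈ Finset.univ.filter (fun a => ¬((δ/2)
              * (Fintype.card ((i : Fin d) → Fin (n i.succ) → F) : ℝ) ≤ ((slice a).card : ℝ))),
              ((δ/2) * (Fintype.card ((i : Fin d) → Fin (n i.succ) → F) : ℝ)) := by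
              refine Finset.sum_le_sum fun a ha => ?_
              exact le_of_lt (not_le.1 (Finset.mem_filter.1 ha).2)
          _ = ((Finset.univ.filter (fun a => ¬((δ/2)
              * (Fintype.card ((i : Fin d) → Fin (n i.succ) → F) : ℝ) ≤ ((slice a).card : ℝ)))).card : ℝ)
              * ((δ/2) * (Fintype.card ((i : Fin d) → Fin (n i.succ) → F) : ℝ)) := by
              rw [Finset.sum_const, nsmul_eq_mul]
          _ ≤ (Fintype.card (Fin (n 0) → F) : ℝ)
              * ((δ/2) * (Fintype.card ((i : Fin d) → Fin (n i.succ) → F) : ℝ)) := by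
              refine mul_le_mul_of_nonneg_right ?_ (by positivity)
              exact_mod_cast Finset.card_le_univ _
      have hsplit := Finset.sum_filter_add_sum_filter_not Finset.univ
        (fun a => (δ/2) * (Fintype.card ((i : Fin d) → Fin (n i.succ) → F) : ℝ)
          ≤ ((slice a).card : ℝ))
        (fun a => ((slice a).card : ℝ))
      rw [hcard] at hS
      have hstrict : (A1.card : ℝ)
            * (Fintype.card ((i : Fin d) → Fin (n i.succ) → F) : ℝ)
          < ((δ/2) * (Fintype.card (Fin (n 0) → F) : ℝ))
            * (Fintype.card ((i : Fin d) → Fin (n i.succ) → F) : ℝ) :=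
        mul_lt_mul_of_pos_right hlt hcT
      rw [hA1def] at hb1 hstrict
      nlinarith [hsum, hsplit, hb1, hb2, hstrict]
    -- a nontrivial character
    obtain ⟨ψ, hψ1⟩ := (AddChar.exists_apply_ne_zero (a := (1:F))).2 one_ne_zero
    have hψ : ψ ≠ 0 := AddChar.ne_zero_iff.2 ⟨1, hψ1⟩
    obtain ⟨V, hVcodim, hVrep⟩ := bogolyubov ψ hψ A1 (δ/2) (by positivity) (by linarith) hA1
    -- choose representations
    have hrep' : ∀ v : Fin (n 0) → F,
        ∃ p : (Fin (n 0) → F) × (Fin (n 0) → F) × (Fin (n 0) → F) × (Fin (n 0) → F),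
        v ∈ V → (p.1 ∈ A1 ∧ p.2.1 ∈ A1 ∧ p.2.2.1 ∈ A1 ∧ p.2.2.2 ∈ A1 ∧
          v = p.1 + p.2.1 - p.2.2.1 - p.2.2.2) := by
      intro v
      by_cases hv : v ∈ V
      · obtain ⟨a, ha, b, hb, c, hc, e, he, hs⟩ := hVrep v hv
        exact ⟨(a, b, c, e), fun _ => ⟨ha, hb, hc, he, hs⟩⟩
      · exact ⟨(0, 0, 0, 0), fun h => absurd h hv⟩
    choose rep hrep using hrep'
    -- induction data for the slices
    have hIH : ∀ a : Fin (n 0) → F,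
        ∃ (T' : Finset ((i : Fin d) → Fin (n i.succ) → F))
          (U' : (k : Fin d) → ((i : Fin d) → Fin (n i.succ) → F)
            → Submodule F (Fin (n k.succ) → F)),
          (∀ k w w', (∀ j : Fin d, j < k → w j = w' j) → U' k w = U' k w') ∧
          (∀ k w, (Module.finrank F (Fin (n k.succ) → F) : ℝ)
              ≤ (16:ℝ)^d/(δ/2)^2 + (Module.finrank F (U' k w) : ℝ)) ∧
          (∀ w, w ∈ T' ↔ ∀ k, w k ∈ U' k w) ∧
          (a ∈ A1 → ∀ w ∈ T', RepL (slice a) (4^d) w) := by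
      intro a
      by_cases ha : a ∈ A1
      · have hdens : (δ/2) * (Fintype.card ((i : Fin d) → Fin (n i.succ) → F) : ℝ)
            ≤ ((slice a).card : ℝ) := by
          rw [hA1def] at ha
          exact (Finset.mem_filter.1 ha).2
        obtain ⟨T', U', h1, h2, h3, h4⟩ := ih (fun i => n i.succ) (δ/2) (by positivity)
          (by linarith) (slice a) hdens
        exact ⟨T', U', h1, h2, h3, fun _ => h4⟩
      · refine ⟨Finset.univ, fun k w => ⊤, fun _ _ _ _ => rfl, ?_, fun w => ?_,
          fun h => absurd h ha⟩
        · intro k w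
          rw [finrank_top]
          have h0 : (0:ℝ) ≤ (16:ℝ)^d/(δ/2)^2 := by positivity
          linarith
        · simp
    choose Tf Uf hU1 hU2 hU3 hRepf using hIH
    -- assemble the system
    set U : (k : Fin (d+1)) → ((i : Fin (d+1)) → Fin (n i) → F)
        → Submodule F (Fin (n k) → F) :=
      fun k => Fin.cases (motive := fun k : Fin (d+1) =>
          ((i : Fin (d+1)) → Fin (n i) → F) → Submodule F (Fin (n k) → F))
        (fun _ => V)
        (fun j u => if u 0 ∈ V then
            Uf (rep (u 0)).1 j (Fin.tail u) ⊓ Uf (rep (u 0)).2.1 j (Fin.tail u)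
              ⊓ Uf (rep (u 0)).2.2.1 j (Fin.tail u) ⊓ Uf (rep (u 0)).2.2.2 j (Fin.tail u)
          else ⊤) k with hUdef
    have hU0 : ∀ u, U 0 u = V := by
      intro u
      rw [hUdef]
      simp
    have hUsucc : ∀ (j : Fin d) (u : (i : Fin (d+1)) → Fin (n i) → F),
        U j.succ u = if u 0 ∈ V then
            Uf (rep (u 0)).1 j (Fin.tail u) ⊓ Uf (rep (u 0)).2.1 j (Fin.tail u)
              ⊓ Uf (rep (u 0)).2.2.1 j (Fin.tail u) ⊓ Uf (rep (u 0)).2.2.2 j (Fin.tail u)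
          else ⊤ := by
      intro j u
      rw [hUdef]
      simp
    refine ⟨Finset.univ.filter (fun u => ∀ k, u k ∈ U k u), U, ?_, ?_, ?_, ?_⟩
    · -- prefix dependence
      intro k u v huv
      revert huv
      refine Fin.cases (motive := fun k : Fin (d+1) =>
          (∀ j : Fin (d+1), j < k → u j = v j) → U k u = U k v) ?_ ?_ k
      · intro _
        rw [hU0, hU0]
      · intro j huv
        have h0 : u 0 = v 0 := huv 0 (Fin.succ_pos j)
        have htail : ∀ x : Fin (n 0) → F,
            Uf x j (Fin.tail u) = Uf x j (Fin.tail v) :=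
          fun x => hU1 x j (Fin.tail u) (Fin.tail v)
            (fun i hij => huv i.succ (by rwa [Fin.succ_lt_succ_iff]))
        rw [hUsucc, hUsucc, h0]
        simp only [htail]
    · -- codimension bound
      intro k u
      refine Fin.cases (motive := fun k : Fin (d+1) =>
          (Module.finrank F (Fin (n k) → F) : ℝ)
            ≤ (16:ℝ)^(d+1)/δ^2 + (Module.finrank F (U k u) : ℝ)) ?_ ?_ k
      · show (Module.finrank F (Fin (n 0) → F) : ℝ)
            ≤ (16:ℝ)^(d+1)/δ^2 + (Module.finrank F (U 0 u) : ℝ)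
        rw [hU0]
        have h4 : (1:ℝ)/((δ/2)^2) = 4/δ^2 := by
          field_simp
          ring
        have h16' : (4:ℝ) ≤ (16:ℝ)^(d+1) := by
          have hp : (1:ℝ) ≤ (16:ℝ)^d := one_le_pow₀ (by norm_num)
          rw [pow_succ]
          nlinarith
        have h16 : (4:ℝ)/δ^2 ≤ (16:ℝ)^(d+1)/δ^2 := by
          gcongr
        linarith [hVcodim]
      · intro j
        show (Module.finrank F (Fin (n j.succ) → F) : ℝ)
            ≤ (16:ℝ)^(d+1)/δ^2 + (Module.finrank F (U j.succ u) : ℝ)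
        rw [hUsucc]
        by_cases h0 : u 0 ∈ V
        · rw [if_pos h0]
          have ha := hU2 (rep (u 0)).1 j (Fin.tail u)
          have hb := hU2 (rep (u 0)).2.1 j (Fin.tail u)
          have hc := hU2 (rep (u 0)).2.2.1 j (Fin.tail u)
          have he := hU2 (rep (u 0)).2.2.2 j (Fin.tail u)
          have i1 := codim_pair _ _ _ _ ha hb
          have i2 := codim_pair _ _ _ _ i1 hc
          have i3 := codim_pair _ _ _ _ i2 he
          have hl : (16:ℝ)^d/(δ/2)^2 + (16:ℝ)^d/(δ/2)^2 + (16:ℝ)^d/(δ/2)^2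
              + (16:ℝ)^d/(δ/2)^2 = (16:ℝ)^(d+1)/δ^2 := by
            rw [pow_succ]
            field_simp
            ring
          linarith [i3]
        · rw [if_neg h0, finrank_top]
          have h0' : (0:ℝ) ≤ (16:ℝ)^(d+1)/δ^2 := by positivity
          linarith
    · -- membership criterion
      intro u
      simp only [Finset.mem_filter, Finset.mem_univ, true_and]
    · -- representation
      intro u hu
      have hmem : ∀ k, u k ∈ U k u := (Finset.mem_filter.1 hu).2
      have h0 : u 0 ∈ V := by
        have h := hmem 0
        rwa [hU0] at h
      obtain ⟨ha1, hb1, hc1, he1, habce⟩ := hrep (u 0) h0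
      have hsucc : ∀ j : Fin d,
          u j.succ ∈ Uf (rep (u 0)).1 j (Fin.tail u) ⊓ Uf (rep (u 0)).2.1 j (Fin.tail u)
            ⊓ Uf (rep (u 0)).2.2.1 j (Fin.tail u) ⊓ Uf (rep (u 0)).2.2.2 j (Fin.tail u) := by
        intro j
        have h := hmem j.succ
        rwa [hUsucc, if_pos h0] at h
      have hmema : ∀ j, Fin.tail u j ∈ Uf (rep (u 0)).1 j (Fin.tail u) := fun j =>
        (Submodule.mem_inf.1 (Submodule.mem_inf.1 (Submodule.mem_inf.1 (hsucc j)).1).1).1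
      have hmemb : ∀ j, Fin.tail u j ∈ Uf (rep (u 0)).2.1 j (Fin.tail u) := fun j =>
        (Submodule.mem_inf.1 (Submodule.mem_inf.1 (Submodule.mem_inf.1 (hsucc j)).1).1).2
      have hmemc : ∀ j, Fin.tail u j ∈ Uf (rep (u 0)).2.2.1 j (Fin.tail u) := fun j =>
        (Submodule.mem_inf.1 (Submodule.mem_inf.1 (hsucc j)).1).2
      have hmeme : ∀ j, Fin.tail u j ∈ Uf (rep (u 0)).2.2.2 j (Fin.tail u) := fun j =>
        (Submodule.mem_inf.1 (hsucc j)).2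
      obtain ⟨Pa, Qa, hPal, hQal, hPaS, hQaS, heqa⟩ :=
        hRepf (rep (u 0)).1 ha1 (Fin.tail u) ((hU3 _ _).2 hmema)
      obtain ⟨Pb, Qb, hPbl, hQbl, hPbS, hQbS, heqb⟩ :=
        hRepf (rep (u 0)).2.1 hb1 (Fin.tail u) ((hU3 _ _).2 hmemb)
      obtain ⟨Pc, Qc, hPcl, hQcl, hPcS, hQcS, heqc⟩ :=
        hRepf (rep (u 0)).2.2.1 hc1 (Fin.tail u) ((hU3 _ _).2 hmemc)
      obtain ⟨Pe, Qe, hPel, hQel, hPeS, hQeS, heqe⟩ :=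
        hRepf (rep (u 0)).2.2.2 he1 (Fin.tail u) ((hU3 _ _).2 hmeme)
      refine ⟨Pa.map (Fin.cons (α := fun i : Fin (d+1) => Fin (n i) → F) (rep (u 0)).1)
          ++ Pb.map (Fin.cons (α := fun i : Fin (d+1) => Fin (n i) → F) (rep (u 0)).2.1)
          ++ Qc.map (Fin.cons (α := fun i : Fin (d+1) => Fin (n i) → F) (rep (u 0)).2.2.1)
          ++ Qe.map (Fin.cons (α := fun i : Fin (d+1) => Fin (n i) → F) (rep (u 0)).2.2.2),
        Qa.map (Fin.cons (α := fun i : Fin (d+1) => Fin (n i) → F) (rep (u 0)).1)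
          ++ Qb.map (Fin.cons (α := fun i : Fin (d+1) => Fin (n i) → F) (rep (u 0)).2.1)
          ++ Pc.map (Fin.cons (α := fun i : Fin (d+1) => Fin (n i) → F) (rep (u 0)).2.2.1)
          ++ Pe.map (Fin.cons (α := fun i : Fin (d+1) => Fin (n i) → F) (rep (u 0)).2.2.2),
        ?_, ?_, ?_, ?_, ?_⟩
      · simp only [List.length_append, List.length_map]
        have h4 : (4:ℕ)^(d+1) = 4^d + 4^d + 4^d + 4^d := by ring
        omega
      · simp only [List.length_append, List.length_map]
        have h4 : (4:ℕ)^(d+1) = 4^d + 4^d + 4^d + 4^d := by ring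
        omega
      · intro s hs
        simp only [List.mem_append, List.mem_map] at hs
        rcases hs with ((⟨w, hw, rfl⟩ | ⟨w, hw, rfl⟩) | ⟨w, hw, rfl⟩) | ⟨w, hw, rfl⟩
        · have h := hPaS w hw
          simp only [slice, Finset.mem_filter] at h
          exact h.2
        · have h := hPbS w hw
          simp only [slice, Finset.mem_filter] at h
          exact h.2
        · have h := hQcS w hw
          simp only [slice, Finset.mem_filter] at h
          exact h.2
        · have h := hQeS w hw
          simp only [slice, Finset.mem_filter] at h
          exact h.2
      · intro s hs
        simp only [List.mem_append, List.mem_map] at hs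
        rcases hs with ((⟨w, hw, rfl⟩ | ⟨w, hw, rfl⟩) | ⟨w, hw, rfl⟩) | ⟨w, hw, rfl⟩
        · have h := hQaS w hw
          simp only [slice, Finset.mem_filter] at h
          exact h.2
        · have h := hQbS w hw
          simp only [slice, Finset.mem_filter] at h
          exact h.2
        · have h := hPcS w hw
          simp only [slice, Finset.mem_filter] at h
          exact h.2
        · have h := hPeS w hw
          simp only [slice, Finset.mem_filter] at h
          exact h.2
      · intro x
        have hx0 : u 0 (x 0) = (rep (u 0)).1 (x 0) + (rep (u 0)).2.1 (x 0)
            - (rep (u 0)).2.2.1 (x 0) - (rep (u 0)).2.2.2 (x 0) := by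
          conv_lhs => rw [habce]
          simp
        have hsplitu : ∏ i : Fin (d+1), u i (x i)
            = u 0 (x 0) * ∏ i : Fin d, Fin.tail u i (Fin.tail x i) := by
          rw [Fin.prod_univ_succ]
          rfl
        have hpiece : ∀ (y : Fin (n 0) → F) (L : List ((i : Fin d) → Fin (n i.succ) → F)),
            ((L.map (Fin.cons (α := fun i : Fin (d+1) => Fin (n i) → F) y)).map
              (fun s => ∏ i : Fin (d+1), s i (x i))).sum
            = y (x 0) * (L.map (fun s => ∏ i : Fin d, s i (Fin.tail x i))).sum := by
          intro y L
          rw [List.map_map]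
          have hfun : ((fun s : (i : Fin (d+1)) → Fin (n i) → F => ∏ i, s i (x i))
              ∘ (Fin.cons (α := fun i : Fin (d+1) => Fin (n i) → F) y))
              = fun w => y (x 0) * ∏ i : Fin d, w i (Fin.tail x i) := by
            funext w
            simp only [Function.comp_apply]
            rw [Fin.prod_univ_succ]
            rfl
          rw [hfun]
          exact List.sum_map_mul_left L _ _
        have hTa := heqa (Fin.tail x)
        have hTb := heqb (Fin.tail x)
        have hTc := heqc (Fin.tail x)
        have hTe := heqe (Fin.tail x)
        rw [hsplitu, hx0]
        simp only [List.map_append, List.sum_append, hpiece]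
        linear_combination ((rep (u 0)).1 (x 0)) * hTa + ((rep (u 0)).2.1 (x 0)) * hTb
          - ((rep (u 0)).2.2.1 (x 0)) * hTc - ((rep (u 0)).2.2.2 (x 0)) * hTe

end Key

section Glue

lemma multiset_exists_of_le_map {α β : Type*} [DecidableEq α] [DecidableEq β] (f : α → β) :
    ∀ (s : Multiset β) (t : Multiset α), s ≤ t.map f → ∃ t' ≤ t, t'.map f = s := by
  intro s
  induction s using Multiset.induction_on with
  | empty => exact fun t _ => ⟨0, Multiset.zero_le t, rfl⟩
  | cons a s ihs =>
    intro t h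
    have ha : a ∈ t.map f := Multiset.mem_of_le h (Multiset.mem_cons_self a s)
    obtain ⟨b, hbt, rfl⟩ := Multiset.mem_map.1 ha
    have hs : s ≤ (t.map f).erase (f b) := by
      have h1 : s = (f b ::ₘ s).erase (f b) := (Multiset.erase_cons_head _ _).symm
      rw [h1]
      exact Multiset.erase_le_erase _ h
    obtain ⟨t2, ht2⟩ := Multiset.exists_cons_of_mem hbt
    have hmap : (t.map f).erase (f b) = (t.erase b).map f := by
      rw [ht2]
      simp
    rw [hmap] at hs
    obtain ⟨t', ht'le, ht'map⟩ := ihs (t.erase b) hs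
    refine ⟨b ::ₘ t', ?_, ?_⟩
    · have hle := Multiset.cons_le_cons b ht'le
      rwa [Multiset.cons_erase hbt] at hle
    · rw [Multiset.map_cons, ht'map]

end Glue


/-- For every multiset `B' ⊆ B` with `|B'| ≥ δ|B|` there is a `(16^d/δ²)`-system whose
elements are chosen from `4^d B' - 4^d B'`. -/
theorem find_system
    (F : Type*) [Field F] [Fintype F] [DecidableEq F]
    (d : ℕ) (n : Fin d → ℕ)
    (δ : ℝ) (hδ : 0 < δ)
    (B' : Multiset (Arr F n Finset.univ)) (hB' : B' ≤ bigB F n)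
    (hdense : δ * ((bigB F n).card : ℝ) ≤ (B'.card : ℝ)) :
    ∃ T : Finset ((i : Fin d) → Fin (n i) → F),
      IsSystemTuples ((16 : ℝ) ^ d / δ ^ 2) T ∧
      ∀ u ∈ T, InSumDiff B' (4 ^ d) (4 ^ d) (tens u) := by
  classical
  obtain ⟨s, hsle, hsmap⟩ := multiset_exists_of_le_map tens B' (Finset.univ.val) hB'
  have hnodup : s.Nodup := Multiset.nodup_of_le hsle Finset.univ.nodup
  set S : Finset ((i : Fin d) → Fin (n i) → F) := ⟨s, hnodup⟩ with hSdef
  have hScard : (S.card : ℝ) = (Multiset.card B' : ℝ) := by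
    rw [← hsmap, Multiset.card_map]
    rfl
  have hBcard : (Multiset.card (bigB F n) : ℝ)
      = (Fintype.card ((i : Fin d) → Fin (n i) → F) : ℝ) := by
    have h : Multiset.card (bigB F n) = Fintype.card ((i : Fin d) → Fin (n i) → F) := by
      rw [bigB, Multiset.card_map]
      rfl
    rw [h]
  have hS : δ * (Fintype.card ((i : Fin d) → Fin (n i) → F) : ℝ) ≤ (S.card : ℝ) := by
    rw [hScard]
    rw [hBcard] at hdense
    exact hdense
  have hpos : (0:ℝ) < (Fintype.card ((i : Fin d) → Fin (n i) → F) : ℝ) := by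
    exact_mod_cast Fintype.card_pos
  have hδ1 : δ ≤ 1 := by
    have h1 : (S.card : ℝ) ≤ (Fintype.card ((i : Fin d) → Fin (n i) → F) : ℝ) := by
      exact_mod_cast Finset.card_le_univ S
    nlinarith
  obtain ⟨T, U, h1, h2, h3, h4⟩ := key d n δ hδ hδ1 S hS
  refine ⟨T, ⟨U, h1, h2, h3⟩, ?_⟩
  intro u hu
  obtain ⟨P, Q, hPl, hQl, hPS, hQS, heq⟩ := h4 u hu
  have hmemB : ∀ w : (i : Fin d) → Fin (n i) → F, w ∈ S → tens w ∈ B' := by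
    intro w hw
    rw [← hsmap]
    exact Multiset.mem_map_of_mem tens hw
  refine ⟨P.length, Q.length, fun i => tens (P.get i), fun i => tens (Q.get i),
    hPl, hQl, ?_, ?_, ?_⟩
  · intro i
    exact hmemB _ (hPS _ (List.mem_iff_get.2 ⟨i, rfl⟩))
  · intro i
    exact hmemB _ (hQS _ (List.mem_iff_get.2 ⟨i, rfl⟩))
  · funext x
    have hx := heq (fun i => x ⟨i, Finset.mem_univ i⟩)
    have hlist : ∀ (L : List ((i : Fin d) → Fin (n i) → F)),
        (∑ i : Fin L.length, tens (L.get i)) x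
          = (L.map (fun s => ∏ i, s i (x ⟨i, Finset.mem_univ i⟩))).sum := by
      intro L
      rw [Finset.sum_apply]
      conv_rhs => rw [← List.ofFn_get L]
      rw [List.map_ofFn, Fin.sum_ofFn]
      rfl
    show tens u x
      = (∑ i : Fin P.length, tens (P.get i) - ∑ i : Fin Q.length, tens (Q.get i)) x
    rw [Pi.sub_apply, hlist P, hlist Q]
    exact hx
end

section
/- Let F be a finite field, let Q be a k-system in F^{n_1} ⊗ ⋯ ⊗ F^{n_d}, and for every nonempty I ⊆ [d] let L_I ⊆ F^I be a subspace of codimension at most l. Let T = ⋂_{I⊆[d], I≠∅} (L_I ⊗ F^{I^c}). Then Q ∩ T contains an f-system for f = k + 2^d·l. -/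
open Finset

/-- Tensor product `F^J ⊗ F^{I∖J} → F^I` (for `J ⊆ I`). -/
def tmulA {F : Type*} [Field F] {d : ℕ} {n : Fin d → ℕ} {I J : Finset (Fin d)}
    (h : J ⊆ I) (s : Arr F n J) (t : Arr F n (I \ J)) : Arr F n I :=
  fun x => s (fun j => x ⟨j.1, h j.2⟩) * t (fun j => x ⟨j.1, Finset.sdiff_subset j.2⟩)

/-- The subspace `V ⊗ F^{I∖J} ⊆ F^I` for a subspace `V ⊆ F^J` (`J ⊆ I`). -/
def spanTensorL {F : Type*} [Field F] {d : ℕ} {n : Fin d → ℕ} {I J : Finset (Fin d)}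
    (h : J ⊆ I) (V : Submodule F (Arr F n J)) : Submodule F (Arr F n I) :=
  Submodule.span F {g | ∃ s ∈ V, ∃ t : Arr F n (I \ J), g = tmulA h s t}

section Aux
variable {F : Type*} [Field F] {d : ℕ} {n : Fin d → ℕ}

/-- partial rank-one tensor on coordinates `I` -/
def tensP (I : Finset (Fin d)) (u : (i : Fin d) → Fin (n i) → F) : Arr F n I :=
  fun x => ∏ i ∈ I.attach, u i.1 (x i)

lemma prod_attach_erase {β : Type*} [CommMonoid β] (I : Finset (Fin d)) (m : Fin d) (hm : m ∈ I)
    (f : {x : Fin d // x ∈ I} → β) :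
    (∏ i ∈ (I.erase m).attach, f ⟨i.1, Finset.mem_of_mem_erase i.2⟩) * f ⟨m, hm⟩
      = ∏ i ∈ I.attach, f i := by
  classical
  set g : Fin d → β := fun i => if h : i ∈ I then f ⟨i, h⟩ else 1 with hg
  have h1 : ∏ i ∈ I.attach, f i = ∏ i ∈ I, g i := by
    rw [← Finset.prod_attach I g]
    exact Finset.prod_congr rfl fun i _ => by simp [hg, i.2]
  have h2 : ∏ i ∈ (I.erase m).attach, f ⟨i.1, Finset.mem_of_mem_erase i.2⟩
      = ∏ i ∈ I.erase m, g i := by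
    rw [← Finset.prod_attach (I.erase m) g]
    exact Finset.prod_congr rfl fun i _ => by simp [hg, Finset.mem_of_mem_erase i.2]
  rw [h1, h2, mul_comm, ← Finset.mul_prod_erase I g hm]
  simp [hg, hm]

/-- The linear map `v ↦ (⊗_{i ∈ I∖{m}} u_i) ⊗ v`. -/
def phiL (I : Finset (Fin d)) (m : Fin d) (hm : m ∈ I) (u : (i : Fin d) → Fin (n i) → F) :
    (Fin (n m) → F) →ₗ[F] Arr F n I where
  toFun v := fun x =>
    (∏ i ∈ (I.erase m).attach, u i.1 (x ⟨i.1, Finset.mem_of_mem_erase i.2⟩)) * v (x ⟨m, hm⟩)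
  map_add' v w := by funext x; simp [mul_add]
  map_smul' c v := by funext x; simp [Pi.smul_apply, smul_eq_mul]; ring

lemma phiL_self (I : Finset (Fin d)) (m : Fin d) (hm : m ∈ I) (u : (i : Fin d) → Fin (n i) → F) :
    phiL I m hm u (u m) = tensP I u := by
  funext x
  exact prod_attach_erase I m hm (fun i => u i.1 (x i))

lemma phiL_congr (I : Finset (Fin d)) (m : Fin d) (hm : m ∈ I)
    (u v : (i : Fin d) → Fin (n i) → F) (h : ∀ i ∈ I.erase m, u i = v i) :
    phiL I m hm u = phiL I m hm v := by
  apply LinearMap.ext; intro w; funext x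
  show (∏ i ∈ (I.erase m).attach, u i.1 _) * _ = (∏ i ∈ (I.erase m).attach, v i.1 _) * _
  congr 1
  exact Finset.prod_congr rfl fun i _ => by rw [h i.1 i.2]

lemma tens_eq_tmulA (u : (i : Fin d) → Fin (n i) → F) (I : Finset (Fin d)) :
    tens u = tmulA (Finset.subset_univ I) (tensP I u) (tensP (Finset.univ \ I) u) := by
  funext x
  set g : Fin d → F := fun i => u i (x ⟨i, Finset.mem_univ i⟩) with hg
  show (∏ i : Fin d, g i)
      = (∏ i ∈ I.attach, g i.1) * ∏ i ∈ (Finset.univ \ I).attach, g i.1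
  rw [Finset.prod_attach, Finset.prod_attach, mul_comm,
    Finset.prod_sdiff (Finset.subset_univ I)]

lemma finrank_comap_ge {M N : Type*} [AddCommGroup M] [Module F M] [AddCommGroup N] [Module F N]
    [FiniteDimensional F M] [FiniteDimensional F N] (f : M →ₗ[F] N) (V : Submodule F N) (l : ℕ)
    (h : Module.finrank F N ≤ l + Module.finrank F V) :
    Module.finrank F M ≤ l + Module.finrank F (V.comap f) := by
  have hq := Submodule.finrank_quotient_add_finrank V
  have hker : LinearMap.ker (V.mkQ.comp f) = V.comap f := by
    rw [LinearMap.ker_comp, Submodule.ker_mkQ]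
  have h1 := LinearMap.finrank_range_add_finrank_ker (V.mkQ.comp f)
  have h2 : Module.finrank F (LinearMap.range (V.mkQ.comp f)) ≤ Module.finrank F (N ⧸ V) :=
    Submodule.finrank_le _
  rw [hker] at h1
  omega

lemma finrank_inf_two {M : Type*} [AddCommGroup M] [Module F M] [FiniteDimensional F M]
    (s t : Submodule F M) (a b : ℕ) (hs : Module.finrank F M ≤ a + Module.finrank F s)
    (ht : Module.finrank F M ≤ b + Module.finrank F t) :
    Module.finrank F M ≤ a + b + Module.finrank F (s ⊓ t : Submodule F M) := by
  have h1 := Submodule.finrank_sup_add_finrank_inf_eq s t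
  have h2 : Module.finrank F ↥(s ⊔ t) ≤ Module.finrank F M := Submodule.finrank_le _
  omega

lemma finrank_finset_inf {M ι : Type*} [AddCommGroup M] [Module F M] [FiniteDimensional F M]
    [DecidableEq ι] (S : Finset ι) (f : ι → Submodule F M) (l : ℕ)
    (hf : ∀ i ∈ S, Module.finrank F M ≤ l + Module.finrank F (f i))
    (base : Submodule F M) (a : ℕ)
    (hbase : Module.finrank F M ≤ a + Module.finrank F base) :
    Module.finrank F M ≤ a + S.card * l + Module.finrank F (base ⊓ S.inf f : Submodule F M) := by
  induction S using Finset.induction with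
  | empty => rw [Finset.inf_empty, inf_top_eq]; simpa using hbase
  | insert _ _ hi ih =>
    rename_i i S
    have IH := ih (fun j hj => hf j (Finset.mem_insert_of_mem hj))
    have step := finrank_inf_two (base ⊓ S.inf f) (f i) (a + S.card * l) l IH
      (hf i (Finset.mem_insert_self i S))
    rw [Finset.card_insert_of_notMem hi, Nat.succ_mul]
    have heq : base ⊓ (insert i S).inf f = (base ⊓ S.inf f) ⊓ f i := by
      rw [Finset.inf_insert]
      rw [inf_comm (f i) (S.inf f), ← inf_assoc]
    rw [heq]
    generalize Module.finrank F ↥(base ⊓ S.inf f ⊓ f i) = c at *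
    generalize S.card * l = b at *
    omega

end Aux

/-- If `Q` is a `k`-system and, for every nonempty `I ⊆ [d]`, `L_I ⊆ F^I` is a subspace of
codimension at most `l`, then `Q ∩ ⋂_{I≠∅}(L_I ⊗ F^{I^c})` contains a `(k + 2^d·l)`-system. -/
theorem system_meets_subspaces
    (F : Type*) [Field F] [Fintype F] [DecidableEq F]
    (d : ℕ) (n : Fin d → ℕ) (k l : ℕ)
    (T : Finset ((i : Fin d) → Fin (n i) → F)) (hT : IsSystemTuples (k : ℝ) T)
    (L : (I : Finset (Fin d)) → Submodule F (Arr F n I))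
    (hL : ∀ I : Finset (Fin d), I.Nonempty →
      Module.finrank F (Arr F n I) ≤ l + Module.finrank F (L I)) :
    ∃ T'' : Finset ((i : Fin d) → Fin (n i) → F),
      IsSystemTuples ((k + 2 ^ d * l : ℕ) : ℝ) T'' ∧
      T''.val.map tens ≤ T.val.map tens ∧
      ∀ u ∈ T'', tens u ∈
        ⨅ I : {I : Finset (Fin d) // I.Nonempty},
          spanTensorL (Finset.subset_univ I.1) (L I.1) := by
  classical
  obtain ⟨U, hU1, hU2, hU3⟩ := hT
  -- the collection of index sets whose maximum is `m`
  set Sk : Fin d → Finset (Finset (Fin d)) :=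
    fun m => Finset.univ.filter (fun I => I.max = (m : WithBot (Fin d))) with hSk
  -- the restriction subspace coming from `L I`
  set W : (m : Fin d) → Finset (Fin d) → ((i : Fin d) → Fin (n i) → F) →
      Submodule F (Fin (n m) → F) :=
    fun m I u => if hm : m ∈ I then (L I).comap (phiL I m hm u) else ⊤ with hW
  set U' : (m : Fin d) → ((i : Fin d) → Fin (n i) → F) → Submodule F (Fin (n m) → F) :=
    fun m u => U m u ⊓ (Sk m).inf (fun I => W m I u) with hU'
  set T'' : Finset ((i : Fin d) → Fin (n i) → F) :=
    Finset.univ.filter (fun u => ∀ m, u m ∈ U' m u) with hT''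
  have hmemSk : ∀ m I, I ∈ Sk m → I.max = (m : WithBot (Fin d)) := by
    intro m I hI
    simpa [hSk] using hI
  have hmemT'' : ∀ u, u ∈ T'' ↔ ∀ m, u m ∈ U' m u := by
    intro u; simp [hT'']
  refine ⟨T'', ⟨U', ?_, ?_, hmemT''⟩, ?_, ?_⟩
  · -- invariance
    intro m u v huv
    simp only [hU']
    rw [hU1 m u v huv]
    congr 1
    apply Finset.inf_congr rfl
    intro I hI
    have hmax := hmemSk m I hI
    simp only [hW]
    by_cases hm : m ∈ I
    · rw [dif_pos hm, dif_pos hm]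
      congr 1
      apply phiL_congr
      intro i hi
      have hiI : i ∈ I := Finset.mem_of_mem_erase hi
      have hine : i ≠ m := Finset.ne_of_mem_erase hi
      have hle : (i : WithBot (Fin d)) ≤ (m : WithBot (Fin d)) := hmax ▸ Finset.le_max hiI
      have : i < m := lt_of_le_of_ne (WithBot.coe_le_coe.mp hle) hine
      exact huv i this
    · rw [dif_neg hm, dif_neg hm]
  · -- codimension bound
    intro m u
    have hk : Module.finrank F (Fin (n m) → F) ≤ k + Module.finrank F (U m u) := by
      have := hU2 m u
      exact_mod_cast this
    have hbound : Module.finrank F (Fin (n m) → F)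
        ≤ k + (Sk m).card * l
          + Module.finrank F (U m u ⊓ (Sk m).inf (fun I => W m I u) : Submodule F _) := by
      apply finrank_finset_inf
      · intro I hI
        have hmax := hmemSk m I hI
        have hmI : m ∈ I := Finset.mem_of_max hmax
        have : W m I u = (L I).comap (phiL I m hmI u) := by
          simp only [hW, dif_pos hmI]
        rw [this]
        exact finrank_comap_ge _ _ _ (hL I ⟨m, hmI⟩)
      · exact hk
    have hcard : (Sk m).card ≤ 2 ^ d := by
      calc (Sk m).card ≤ (Finset.univ : Finset (Finset (Fin d))).card :=
            Finset.card_filter_le _ _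
        _ = 2 ^ d := by simp [Fintype.card_finset]
    have hbound' : Module.finrank F (Fin (n m) → F)
        ≤ k + (Sk m).card * l + Module.finrank F (U' m u) := hbound
    have : Module.finrank F (Fin (n m) → F)
        ≤ k + 2 ^ d * l + Module.finrank F (U' m u) := by
      have := Nat.mul_le_mul_right l hcard
      omega
    exact_mod_cast this
  · -- subset of T
    have hsub : T'' ⊆ T := by
      intro u hu
      rw [hU3]
      intro m
      have := (hmemT'' u).mp hu m
      rw [hU'] at this
      exact this.1
    exact Multiset.map_le_map (Finset.val_le_iff.mpr hsub)
  · -- membership in the intersection of tensor subspaces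
    intro u hu
    rw [Submodule.mem_iInf]
    rintro ⟨I, hI⟩
    set m := I.max' hI with hm
    have hmI : m ∈ I := I.max'_mem hI
    have hmax : I.max = (m : WithBot (Fin d)) := (I.coe_max' hI).symm
    have hISk : I ∈ Sk m := by simp [hSk, hmax]
    have h1 : u m ∈ U m u ⊓ (Sk m).inf (fun I => W m I u) := (hmemT'' u).mp hu m
    have hle : (Sk m).inf (fun I => W m I u) ≤ W m I u := Finset.inf_le hISk
    have h2 : u m ∈ (if hm : m ∈ I then (L I).comap (phiL I m hm u) else ⊤) :=
      hle (Submodule.mem_inf.mp h1).2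
    rw [dif_pos hmI] at h2
    have h3 : tensP I u ∈ L I := by
      rw [← phiL_self I m hmI u]
      exact h2
    rw [tens_eq_tmulA u I]
    exact Submodule.subset_span ⟨tensP I u, h3, tensP (Finset.univ \ I) u, rfl⟩
end
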